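/- If G has maximum SLEE among all connected graphs on n vertices with r cut vertices (1 ≤ r ≤ n − 3), then every cut vertex of G lies in exactly two blocks of G. -/

import Mathlib

open scoped Classical

variable {V : Type*}

/-- The signless Laplacian matrix `Q = D + A` of a graph. -/
noncomputable def sLap (G : SimpleGraph V) [Fintype V] : Matrix V V ℝ :=
  Matrix.diagonal (fun v => (G.degree v : ℝ)) + G.adjMatrix ℝ

theorem sLap_isHermitian (G : SimpleGraph V) [Fintype V] : (sLap G).IsHermitian := by
  unfold sLap
  rw [Matrix.IsHermitian, Matrix.conjTranspose_eq_transpose_of_trivial, Matrix.transpose_add,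
    Matrix.diagonal_transpose, SimpleGraph.transpose_adjMatrix]

/-- The Laplacian matrix `L = D - A` of a graph. -/
noncomputable def lap (G : SimpleGraph V) [Fintype V] : Matrix V V ℝ :=
  Matrix.diagonal (fun v => (G.degree v : ℝ)) - G.adjMatrix ℝ

theorem lap_isHermitian (G : SimpleGraph V) [Fintype V] : (lap G).IsHermitian := by
  unfold lap
  rw [Matrix.IsHermitian, Matrix.conjTranspose_eq_transpose_of_trivial, Matrix.transpose_sub,
    Matrix.diagonal_transpose, SimpleGraph.transpose_adjMatrix]

/-- The signless Laplacian Estrada index: the sum of `exp qᵢ` over the eigenvalues of `Q`. -/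
noncomputable def SLEE (G : SimpleGraph V) [Fintype V] : ℝ :=
  ∑ i, Real.exp ((sLap_isHermitian G).eigenvalues i)

/-- The Laplacian Estrada index: the sum of `exp μᵢ` over the eigenvalues of `L`. -/
noncomputable def LEE (G : SimpleGraph V) [Fintype V] : ℝ :=
  ∑ i, Real.exp ((lap_isHermitian G).eigenvalues i)

/-- Semi-edge walks of length `k` from `x` to `y`: a sequence of `k+1` vertices and `k`
edges of `G` such that consecutive vertices are (not necessarily distinct) endpoints of
the intervening edge. -/
def semiEdgeWalks (G : SimpleGraph V) (k : ℕ) (x y : V) :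
    Set ((Fin (k + 1) → V) × (Fin k → Sym2 V)) :=
  {w | w.1 0 = x ∧ w.1 (Fin.last k) = y ∧
    ∀ i : Fin k, w.2 i ∈ G.edgeSet ∧ w.1 i.castSucc ∈ w.2 i ∧ w.1 i.succ ∈ w.2 i}

/-- Closed semi-edge walks of length `k` in `G`. -/
def closedSemiEdgeWalks (G : SimpleGraph V) (k : ℕ) :
    Set ((Fin (k + 1) → V) × (Fin k → Sym2 V)) :=
  {w | w.1 0 = w.1 (Fin.last k) ∧
    ∀ i : Fin k, w.2 i ∈ G.edgeSet ∧ w.1 i.castSucc ∈ w.2 i ∧ w.1 i.succ ∈ w.2 i}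

/-- The number of connected components of a graph. -/
noncomputable def numComponents (G : SimpleGraph V) : ℕ := Nat.card G.ConnectedComponent

/-- A cut vertex: a vertex whose removal increases the number of connected components. -/
def IsCutVertex (G : SimpleGraph V) (v : V) : Prop :=
  numComponents G < numComponents (G.induce ({v}ᶜ : Set V))

/-- The number of cut vertices of a graph. -/
noncomputable def cutVertexCount (G : SimpleGraph V) [Fintype V] : ℕ :=
  (Finset.univ.filter (fun v => IsCutVertex G v)).card

/-- The graph obtained from `G` by adding the edge `uv`. -/
def addEdge (G : SimpleGraph V) (u v : V) : SimpleGraph V :=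
  G ⊔ SimpleGraph.fromEdgeSet {s(u, v)}

/-- A block of `G`: a maximal vertex set inducing a connected subgraph with no cut vertex. -/
def IsBlock (G : SimpleGraph V) (B : Set V) : Prop :=
  (G.induce B).Connected ∧ (∀ v : B, ¬ IsCutVertex (G.induce B) v) ∧
  ∀ C : Set V, B ⊆ C → (G.induce C).Connected → (∀ v : C, ¬ IsCutVertex (G.induce C) v) →
    B = C

section Analysis
variable [Fintype V]

lemma trace_pow_eq_sum_eig (A : Matrix V V ℝ) (hA : A.IsHermitian) (k : ℕ) :
    (A ^ k).trace = ∑ i, hA.eigenvalues i ^ k := by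
  classical
  set U : Matrix V V ℝ := (hA.eigenvectorUnitary : Matrix V V ℝ) with hUdef
  have hU1 : star U * U = 1 := (Matrix.mem_unitaryGroup_iff').mp hA.eigenvectorUnitary.2
  have hU2 : U * star U = 1 := (Matrix.mem_unitaryGroup_iff).mp hA.eigenvectorUnitary.2
  set D : Matrix V V ℝ := Matrix.diagonal (RCLike.ofReal ∘ hA.eigenvalues) with hDdef
  have hspec : A = U * D * star U := hA.spectral_theorem
  have hpow : A ^ k = U * D ^ k * star U := by
    induction k with
    | zero => simp [hU2]
    | succ k ih =>
      rw [pow_succ, ih, hspec, pow_succ]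
      rw [show U * D ^ k * star U * (U * D * star U) = U * D ^ k * (star U * U) * D * star U by
        simp only [Matrix.mul_assoc]]
      rw [hU1, Matrix.mul_one]
      simp only [Matrix.mul_assoc]
  rw [hpow, Matrix.trace_mul_cycle, hU1, Matrix.one_mul,
    Matrix.diagonal_pow, Matrix.trace_diagonal]
  simp

lemma SLEE_eq_tsum (G : SimpleGraph V) :
    SLEE G = ∑' (k : ℕ), (sLap G ^ k).trace / (Nat.factorial k) := by
  unfold SLEE
  have h1 : ∀ i : V, Real.exp ((sLap_isHermitian G).eigenvalues i)
      = ∑' (k : ℕ), ((sLap_isHermitian G).eigenvalues i) ^ k / (Nat.factorial k) := by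
    intro i
    rw [Real.exp_eq_exp_ℝ, NormedSpace.exp_eq_tsum_div]
  simp_rw [h1]
  rw [← Summable.tsum_finsetSum (fun i _ => Real.summable_pow_div_factorial _)]
  congr 1
  ext k
  rw [trace_pow_eq_sum_eig _ (sLap_isHermitian G), Finset.sum_div]


lemma degree_mono {G H : SimpleGraph V} (h : G ≤ H) (v : V) : G.degree v ≤ H.degree v := by
  classical
  apply Finset.card_le_card
  intro u hu
  rw [SimpleGraph.mem_neighborFinset] at *
  exact h hu

lemma sLap_apply (G : SimpleGraph V) (i j : V) :
    sLap G i j = (if i = j then (G.degree i : ℝ) else 0) + (if G.Adj i j then 1 else 0) := by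
  classical
  simp [sLap, Matrix.diagonal_apply, Matrix.add_apply]

lemma sLap_nonneg (G : SimpleGraph V) (i j : V) : 0 ≤ sLap G i j := by
  rw [sLap_apply]
  positivity

lemma sLap_mono {G H : SimpleGraph V} (h : G ≤ H) (i j : V) : sLap G i j ≤ sLap H i j := by
  rw [sLap_apply, sLap_apply]
  apply add_le_add
  · split
    · exact_mod_cast degree_mono h i
    · exact le_rfl
  · by_cases hG : G.Adj i j
    · simp [hG, h hG]
    · simp only [hG, if_false]
      split <;> norm_num

lemma pow_entry_mono {A B : Matrix V V ℝ} (hA : ∀ i j, 0 ≤ A i j)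
    (hAB : ∀ i j, A i j ≤ B i j) (k : ℕ) :
    ∀ i j, 0 ≤ (A ^ k) i j ∧ (A ^ k) i j ≤ (B ^ k) i j := by
  induction k with
  | zero =>
    intro i j
    by_cases hij : i = j <;> simp [pow_zero, Matrix.one_apply, hij]
  | succ k ih =>
    intro i j
    rw [pow_succ, pow_succ, Matrix.mul_apply, Matrix.mul_apply]
    constructor
    · exact Finset.sum_nonneg fun l _ => mul_nonneg (ih i l).1 (hA l j)
    · apply Finset.sum_le_sum
      intro l _
      exact mul_le_mul (ih i l).2 (hAB l j) (hA l j) (le_trans (ih i l).1 (ih i l).2)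

lemma pow_entry_nonneg {A : Matrix V V ℝ} (hA : ∀ i j, 0 ≤ A i j) (k : ℕ) (i j : V) :
    0 ≤ (A ^ k) i j :=
  (pow_entry_mono hA (fun _ _ => le_rfl) k i j).1

lemma trace_pow_mono {G H : SimpleGraph V} (h : G ≤ H) (k : ℕ) :
    (sLap G ^ k).trace ≤ (sLap H ^ k).trace := by
  apply Finset.sum_le_sum
  intro i _
  exact (pow_entry_mono (sLap_nonneg G) (sLap_mono h) k i i).2

lemma trace_sLap_lt {G H : SimpleGraph V} (h : G ≤ H) {u w : V}
    (hadj : H.Adj u w) (hnadj : ¬ G.Adj u w) : (sLap G).trace < (sLap H).trace := by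
  classical
  have hd : ∀ K : SimpleGraph V, (sLap K).trace = ∑ i, (K.degree i : ℝ) := by
    intro K
    apply Finset.sum_congr rfl
    intro i _
    simp [sLap_apply]
  rw [hd, hd]
  apply Finset.sum_lt_sum (fun i _ => by exact_mod_cast degree_mono h i)
  refine ⟨u, Finset.mem_univ u, ?_⟩
  have hsub : G.neighborFinset u ⊆ H.neighborFinset u := by
    intro x hx
    rw [SimpleGraph.mem_neighborFinset] at *
    exact h hx
  have : G.degree u < H.degree u := by
    apply Finset.card_lt_card
    rw [Finset.ssubset_iff_of_subset hsub]
    exact ⟨w, by rwa [SimpleGraph.mem_neighborFinset], by rwa [SimpleGraph.mem_neighborFinset]⟩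
  exact Nat.cast_lt.mpr this

lemma summable_trace_pow (G : SimpleGraph V) :
    Summable (fun k : ℕ => (sLap G ^ k).trace / (Nat.factorial k)) := by
  have : (fun k : ℕ => (sLap G ^ k).trace / (Nat.factorial k))
      = fun k => ∑ i, ((sLap_isHermitian G).eigenvalues i) ^ k / (Nat.factorial k) := by
    funext k
    rw [trace_pow_eq_sum_eig _ (sLap_isHermitian G), Finset.sum_div]
  rw [this]
  exact summable_sum fun i _ => Real.summable_pow_div_factorial _

lemma SLEE_strict_mono {G H : SimpleGraph V} (hle : G ≤ H) (hne : G ≠ H) :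
    SLEE G < SLEE H := by
  obtain ⟨u, w, hadj, hnadj⟩ : ∃ u w, H.Adj u w ∧ ¬ G.Adj u w := by
    by_contra hc
    push_neg at hc
    exact hne (le_antisymm hle fun u w hw => hc u w hw)
  rw [SLEE_eq_tsum, SLEE_eq_tsum]
  apply Summable.tsum_lt_tsum_of_nonneg (i := 1)
  · intro k
    apply div_nonneg _ (by positivity)
    exact Finset.sum_nonneg fun i _ => pow_entry_nonneg (sLap_nonneg G) k i i
  · intro k
    apply div_le_div_of_nonneg_right (trace_pow_mono hle k)
    positivity
  · simp only [pow_one, Nat.factorial_one, Nat.cast_one, div_one]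
    exact trace_sLap_lt hle hadj hnadj
  · exact summable_trace_pow H

end Analysis

section Components

open SimpleGraph

variable {W : Type*}

lemma numComponents_le_of_le [Finite W] {K K' : SimpleGraph W} (h : K ≤ K') :
    numComponents K' ≤ numComponents K := by
  apply Nat.card_le_card_of_surjective
    (SimpleGraph.ConnectedComponent.map (SimpleGraph.Hom.ofLE h))
  intro c
  refine SimpleGraph.ConnectedComponent.ind (fun w => ?_) c
  exact ⟨K.connectedComponentMk w, rfl⟩

lemma connected_iff_numComponents_eq_one {K : SimpleGraph W} :
    K.Connected ↔ numComponents K = 1 := by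
  rw [SimpleGraph.connected_iff, numComponents, Nat.card_eq_one_iff_unique]
  constructor
  · rintro ⟨hp, hne⟩
    refine ⟨⟨?_⟩, ⟨K.connectedComponentMk (Classical.arbitrary W)⟩⟩
    refine SimpleGraph.ConnectedComponent.ind₂ (fun a b => ?_)
    exact SimpleGraph.ConnectedComponent.sound (hp a b)
  · rintro ⟨hs, ⟨c⟩⟩
    obtain ⟨w, -⟩ := c.exists_rep
    refine ⟨fun a b => ?_, ⟨w⟩⟩
    have := @Subsingleton.elim _ hs (K.connectedComponentMk a) (K.connectedComponentMk b)
    exact SimpleGraph.ConnectedComponent.exact this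

lemma connected_of_numComponents_le_one {K : SimpleGraph W} [Finite W] [Nonempty W]
    (h : numComponents K ≤ 1) : K.Connected := by
  rw [connected_iff_numComponents_eq_one]
  refine le_antisymm h ?_
  have : (Nonempty K.ConnectedComponent) := ⟨K.connectedComponentMk (Classical.arbitrary W)⟩
  exact Nat.one_le_iff_ne_zero.mpr (Nat.card_ne_zero.mpr ⟨this, Quot.finite _⟩)

lemma addEdge_adj (K : SimpleGraph W) (u w a b : W) :
    (addEdge K u w).Adj a b ↔
      K.Adj a b ∨ (a ≠ b ∧ ((a = u ∧ b = w) ∨ (a = w ∧ b = u))) := by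
  simp only [addEdge, SimpleGraph.sup_adj, SimpleGraph.fromEdgeSet_adj, Set.mem_singleton_iff,
    Sym2.eq, Sym2.rel_iff', Prod.mk.injEq, Prod.swap_prod_mk]
  tauto

lemma le_addEdge (K : SimpleGraph W) (u w : W) : K ≤ addEdge K u w := le_sup_left

lemma addEdge_reach {K : SimpleGraph W} {u w a b : W}
    (h : (addEdge K u w).Reachable a b) :
    K.Reachable a b ∨ (K.Reachable a u ∧ K.Reachable w b) ∨
      (K.Reachable a w ∧ K.Reachable u b) := by
  obtain ⟨p⟩ := h
  induction p with
  | nil => exact Or.inl (SimpleGraph.Reachable.refl _)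
  | @cons a c b hadj p ih =>
    rw [addEdge_adj] at hadj
    rcases hadj with hK | ⟨-, ⟨hau, hcw⟩ | ⟨haw, hcu⟩⟩
    · have hac : K.Reachable a c := hK.reachable
      rcases ih with h1 | ⟨h1, h2⟩ | ⟨h1, h2⟩
      · exact Or.inl (hac.trans h1)
      · exact Or.inr (Or.inl ⟨hac.trans h1, h2⟩)
      · exact Or.inr (Or.inr ⟨hac.trans h1, h2⟩)
    · subst hau; subst hcw
      rcases ih with h1 | ⟨h1, h2⟩ | ⟨h1, h2⟩
      · exact Or.inr (Or.inl ⟨SimpleGraph.Reachable.refl _, h1⟩)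
      · exact Or.inl (h1.symm.trans h2)
      · exact Or.inl h2
    · subst haw; subst hcu
      rcases ih with h1 | ⟨h1, h2⟩ | ⟨h1, h2⟩
      · exact Or.inr (Or.inr ⟨SimpleGraph.Reachable.refl _, h1⟩)
      · exact Or.inl h2
      · exact Or.inr (Or.inr ⟨SimpleGraph.Reachable.refl _, h2⟩)


lemma numComponents_le_addEdge_add_one [Finite W] (K : SimpleGraph W) (u w : W) :
    numComponents K ≤ numComponents (addEdge K u w) + 1 := by
  classical
  set K' := addEdge K u w with hK'
  let f : K.ConnectedComponent → K'.ConnectedComponent :=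
    SimpleGraph.ConnectedComponent.map (SimpleGraph.Hom.ofLE (le_addEdge K u w))
  let F : K.ConnectedComponent → Option K'.ConnectedComponent :=
    fun c => if c = K.connectedComponentMk u then none else some (f c)
  have hinj : Function.Injective F := by
    intro c c' hcc
    by_cases h1 : c = K.connectedComponentMk u
    · by_cases h2 : c' = K.connectedComponentMk u
      · rw [h1, h2]
      · simp only [F, h1, h2, if_pos rfl, if_neg h2] at hcc
        exact absurd hcc.symm (Option.some_ne_none _)
    · by_cases h2 : c' = K.connectedComponentMk u
      · simp only [F, h1, h2, if_neg h1, if_pos rfl] at hcc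
        exact absurd hcc (Option.some_ne_none _)
      · simp only [F, if_neg h1, if_neg h2, Option.some_inj] at hcc
        revert h1 h2 hcc
        refine SimpleGraph.ConnectedComponent.ind₂ (fun x y h1 h2 hcc => ?_) c c'
        have hxy : K'.Reachable x y := by
          have := SimpleGraph.ConnectedComponent.exact hcc
          exact this
        rcases addEdge_reach hxy with h | ⟨ha, hb⟩ | ⟨ha, hb⟩
        · exact SimpleGraph.ConnectedComponent.sound h
        · exact absurd (SimpleGraph.ConnectedComponent.sound ha) h1
        · exact absurd (SimpleGraph.ConnectedComponent.sound hb.symm) h2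
  haveI : Finite K'.ConnectedComponent := Quot.finite _
  haveI := Fintype.ofFinite K'.ConnectedComponent
  calc numComponents K ≤ Nat.card (Option K'.ConnectedComponent) :=
        Nat.card_le_card_of_injective F hinj
    _ = numComponents K' + 1 := Finite.card_option

lemma numComponents_le_addEdge_of_reachable [Finite W] {K : SimpleGraph W} {u w : W}
    (hr : K.Reachable u w) : numComponents K ≤ numComponents (addEdge K u w) := by
  apply Nat.card_le_card_of_injective
    (SimpleGraph.ConnectedComponent.map (SimpleGraph.Hom.ofLE (le_addEdge K u w)))
  intro c c'
  refine SimpleGraph.ConnectedComponent.ind₂ (fun x y hcc => ?_) c c'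
  have hxy : (addEdge K u w).Reachable x y := SimpleGraph.ConnectedComponent.exact hcc
  rcases addEdge_reach hxy with h | ⟨ha, hb⟩ | ⟨ha, hb⟩
  · exact SimpleGraph.ConnectedComponent.sound h
  · exact SimpleGraph.ConnectedComponent.sound ((ha.trans hr).trans hb)
  · exact SimpleGraph.ConnectedComponent.sound ((ha.trans hr.symm).trans hb)

end Components

section Induce

lemma induce_le_induce {W : Type*} {K K' : SimpleGraph W} (h : K ≤ K') (S : Set W) :
    K.induce S ≤ K'.induce S := fun _ _ hab => h hab

lemma induce_addEdge_of_mem {W : Type*} {K : SimpleGraph W} {u w : W} {S : Set W}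
    (hu : u ∈ S) (hw : w ∈ S) :
    (addEdge K u w).induce S = addEdge (K.induce S) ⟨u, hu⟩ ⟨w, hw⟩ := by
  ext a b
  simp only [SimpleGraph.comap_adj, Function.Embedding.coe_subtype, addEdge_adj, ne_eq,
    Subtype.ext_iff]

lemma induce_addEdge_of_not_mem {W : Type*} {K : SimpleGraph W} {u w : W} {S : Set W}
    (h : u ∉ S ∨ w ∉ S) : (addEdge K u w).induce S = K.induce S := by
  ext a b
  simp only [SimpleGraph.comap_adj, Function.Embedding.coe_subtype, addEdge_adj]
  constructor
  · rintro (hK | ⟨-, ⟨ha, hb⟩ | ⟨ha, hb⟩⟩)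
    · exact hK
    · rcases h with h | h
      · exact absurd (ha ▸ a.2) h
      · exact absurd (hb ▸ b.2) h
    · rcases h with h | h
      · exact absurd (hb ▸ b.2) h
      · exact absurd (ha ▸ a.2) h
  · exact Or.inl

variable [Fintype V]

lemma isCutVertex_iff_of_connected {K : SimpleGraph V} (h : K.Connected) (x : V) :
    IsCutVertex K x ↔ 2 ≤ numComponents (K.induce ({x}ᶜ : Set V)) := by
  unfold IsCutVertex
  rw [connected_iff_numComponents_eq_one.mp h]
  omega

lemma isCutVertex_addEdge_iff {G : SimpleGraph V} (hconn : G.Connected) {u w v : V}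
    (hu : G.Adj v u) (hw : G.Adj v w)
    (hv2 : 2 ≤ numComponents ((addEdge G u w).induce ({v}ᶜ : Set V))) (x : V) :
    IsCutVertex (addEdge G u w) x ↔ IsCutVertex G x := by
  have hconn' := hconn.mono (le_addEdge G u w)
  rw [isCutVertex_iff_of_connected hconn, isCutVertex_iff_of_connected hconn']
  constructor
  · intro h2
    exact le_trans h2 (numComponents_le_of_le (induce_le_induce (le_addEdge G u w) _))
  · intro h2
    by_cases hxv : x = v
    · subst hxv; exact hv2
    by_cases hxu : x = u
    · subst hxu
      rwa [induce_addEdge_of_not_mem (Or.inl (by simp))]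
    by_cases hxw : x = w
    · subst hxw
      rwa [induce_addEdge_of_not_mem (Or.inr (by simp))]
    · have hmu : u ∈ ({x}ᶜ : Set V) := by simp [Ne.symm hxu]
      have hmw : w ∈ ({x}ᶜ : Set V) := by simp [Ne.symm hxw]
      have hmv : v ∈ ({x}ᶜ : Set V) := by simp [Ne.symm hxv]
      rw [induce_addEdge_of_mem hmu hmw]
      refine le_trans h2 (numComponents_le_addEdge_of_reachable ?_)
      have r1 : (G.induce ({x}ᶜ : Set V)).Adj ⟨u, hmu⟩ ⟨v, hmv⟩ := by
        simp only [SimpleGraph.comap_adj, Function.Embedding.coe_subtype]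
        exact hu.symm
      have r2 : (G.induce ({x}ᶜ : Set V)).Adj ⟨v, hmv⟩ ⟨w, hmw⟩ := by
        simp only [SimpleGraph.comap_adj, Function.Embedding.coe_subtype]
        exact hw
      exact r1.reachable.trans r2.reachable

lemma cutVertexCount_addEdge {G : SimpleGraph V} (hconn : G.Connected) {u w v : V}
    (hu : G.Adj v u) (hw : G.Adj v w)
    (hv2 : 2 ≤ numComponents ((addEdge G u w).induce ({v}ᶜ : Set V))) :
    cutVertexCount (addEdge G u w) = cutVertexCount G := by
  unfold cutVertexCount
  congr 1
  apply Finset.filter_congr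
  intro x _
  exact isCutVertex_addEdge_iff hconn hu hw hv2 x

end Induce

section Blocks

lemma numComponents_le_card {W : Type*} [Finite W] (K : SimpleGraph W) :
    numComponents K ≤ Nat.card W :=
  Nat.card_le_card_of_surjective K.connectedComponentMk (fun c => c.exists_rep)

variable [Fintype V]

lemma numComponents_induce_compl {G : SimpleGraph V} (S : Set V) (x : V) (hx : x ∈ S) :
    numComponents ((G.induce S).induce ({(⟨x, hx⟩ : S)}ᶜ : Set S))
      = numComponents (G.induce (S \ {x})) := by
  apply Nat.card_congr
  apply SimpleGraph.Iso.connectedComponentEquiv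
  exact ⟨⟨fun y => ⟨y.1.1, y.1.2, fun h => y.2 (Subtype.ext h)⟩,
          fun z => ⟨⟨z.1, z.2.1⟩, fun h => z.2.2 (congrArg Subtype.val h)⟩,
          fun y => by apply Subtype.ext; apply Subtype.ext; rfl,
          fun z => by apply Subtype.ext; rfl⟩,
        Iff.rfl⟩

/-- Our working predicate: `S` induces a connected subgraph with no cut vertices. -/
def NiceSet (G : SimpleGraph V) (S : Set V) : Prop :=
  (G.induce S).Connected ∧ ∀ x ∈ S, numComponents (G.induce (S \ {x})) ≤ 1

lemma not_isCutVertex_iff {G : SimpleGraph V} {S : Set V} (hS : (G.induce S).Connected)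
    {x : V} (hx : x ∈ S) :
    ¬ IsCutVertex (G.induce S) ⟨x, hx⟩ ↔ numComponents (G.induce (S \ {x})) ≤ 1 := by
  unfold IsCutVertex
  rw [connected_iff_numComponents_eq_one.mp hS, numComponents_induce_compl S x hx]
  omega

lemma isBlock_iff {G : SimpleGraph V} {B : Set V} :
    IsBlock G B ↔ NiceSet G B ∧ ∀ C, B ⊆ C → NiceSet G C → B = C := by
  unfold IsBlock NiceSet
  constructor
  · rintro ⟨h1, h2, h3⟩
    refine ⟨⟨h1, fun x hx => (not_isCutVertex_iff h1 hx).mp (h2 ⟨x, hx⟩)⟩, ?_⟩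
    rintro C hBC ⟨hC1, hC2⟩
    exact h3 C hBC hC1 (fun z => (not_isCutVertex_iff hC1 z.2).mpr (hC2 z.1 z.2))
  · rintro ⟨⟨h1, h2⟩, h3⟩
    refine ⟨h1, fun x => (not_isCutVertex_iff h1 x.2).mpr (h2 x.1 x.2), ?_⟩
    intro C hBC hC1 hC2
    exact h3 C hBC ⟨hC1, fun z hz => (not_isCutVertex_iff hC1 hz).mp (hC2 ⟨z, hz⟩)⟩

lemma exists_block_of_nice {G : SimpleGraph V} {S : Set V} (h : NiceSet G S) :
    ∃ B, IsBlock G B ∧ S ⊆ B := by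
  classical
  let s : Finset (Set V) := Finset.univ.filter (fun C => S ⊆ C ∧ NiceSet G C)
  have hs : s.Nonempty := ⟨S, by simp [s, h]⟩
  obtain ⟨B, hBs, hBmax⟩ := Finset.exists_max_image s (fun C => C.ncard) hs
  simp only [s, Finset.mem_filter, Finset.mem_univ, true_and] at hBs
  refine ⟨B, ?_, hBs.1⟩
  rw [isBlock_iff]
  refine ⟨hBs.2, fun C hBC hC => ?_⟩
  have hCs : C ∈ s := by
    simp only [s, Finset.mem_filter, Finset.mem_univ, true_and]
    exact ⟨hBs.1.trans hBC, hC⟩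
  exact Set.eq_of_subset_of_ncard_le hBC (hBmax C hCs) (Set.toFinite C)

lemma numComponents_le_one_of_subsingleton {W : Type*} [Finite W] [Subsingleton W]
    (K : SimpleGraph W) : numComponents K ≤ 1 :=
  le_trans (numComponents_le_card K) (Finite.card_le_one_iff_subsingleton.mpr ‹_›)

lemma nice_pair {G : SimpleGraph V} {x y : V} (h : G.Adj x y) : NiceSet G {x, y} := by
  refine ⟨SimpleGraph.induce_pair_connected_of_adj h, ?_⟩
  intro z hz
  rcases hz with rfl | hz
  · rw [Set.pair_diff_left h.ne]
    exact numComponents_le_one_of_subsingleton _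
  · rw [Set.mem_singleton_iff] at hz
    subst hz
    rw [Set.pair_diff_right h.ne]
    exact numComponents_le_one_of_subsingleton _


lemma connected_induce_of_mem {G : SimpleGraph V} {S : Set V} (h : numComponents (G.induce S) ≤ 1)
    {a : V} (ha : a ∈ S) : (G.induce S).Connected :=
  haveI : Nonempty S := ⟨⟨a, ha⟩⟩
  connected_of_numComponents_le_one h

lemma nice_triangle {G : SimpleGraph V} {x y z : V} (hxy : G.Adj x y) (hxz : G.Adj x z)
    (hyz : G.Adj y z) : NiceSet G {x, y, z} := by
  have hunion : ({x, y, z} : Set V) = {x, y} ∪ {x, z} := by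
    ext a; simp; tauto
  constructor
  · rw [hunion]
    exact SimpleGraph.induce_union_connected (SimpleGraph.induce_pair_connected_of_adj hxy).preconnected
      (SimpleGraph.induce_pair_connected_of_adj hxz).preconnected ⟨x, by simp⟩
  · intro a ha
    have key : ∀ p q : V, G.Adj p q → ({x, y, z} : Set V) \ {a} = {p, q} →
        numComponents (G.induce (({x, y, z} : Set V) \ {a})) ≤ 1 := by
      intro p q hpq hset
      rw [hset, connected_iff_numComponents_eq_one.mp
        (SimpleGraph.induce_pair_connected_of_adj hpq)]
    rcases ha with rfl | rfl | ha
    · refine key y z hyz ?_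
      ext b
      simp only [Set.mem_diff, Set.mem_insert_iff, Set.mem_singleton_iff]
      constructor
      · rintro ⟨rfl | rfl | rfl, hb⟩ <;> tauto
      · rintro (rfl | rfl)
        · exact ⟨Or.inr (Or.inl rfl), hxy.ne'⟩
        · exact ⟨Or.inr (Or.inr rfl), hxz.ne'⟩
    · refine key x z hxz ?_
      ext b
      simp only [Set.mem_diff, Set.mem_insert_iff, Set.mem_singleton_iff]
      constructor
      · rintro ⟨rfl | rfl | rfl, hb⟩ <;> tauto
      · rintro (rfl | rfl)
        · exact ⟨Or.inl rfl, hxy.ne⟩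
        · exact ⟨Or.inr (Or.inr rfl), hyz.ne'⟩
    · rw [Set.mem_singleton_iff] at ha
      subst ha
      refine key x y hxy ?_
      ext b
      simp only [Set.mem_diff, Set.mem_insert_iff, Set.mem_singleton_iff]
      constructor
      · rintro ⟨rfl | rfl | rfl, hb⟩ <;> tauto
      · rintro (rfl | rfl)
        · exact ⟨Or.inl rfl, hxz.ne⟩
        · exact ⟨Or.inr (Or.inl rfl), hyz.ne⟩

lemma block_eq_block_of_two_mem {G : SimpleGraph V} {B1 B2 : Set V} {a b : V}
    (h1 : IsBlock G B1) (h2 : IsBlock G B2) (ha1 : a ∈ B1) (ha2 : a ∈ B2)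
    (hb1 : b ∈ B1) (hb2 : b ∈ B2) (hab : a ≠ b) : B1 = B2 := by
  rw [isBlock_iff] at h1 h2
  have hnice : NiceSet G (B1 ∪ B2) := by
    constructor
    · exact SimpleGraph.induce_union_connected h1.1.1.preconnected h2.1.1.preconnected ⟨a, ha1, ha2⟩
    · intro x hx
      have hsplit : (B1 ∪ B2) \ {x} = (B1 \ {x}) ∪ (B2 \ {x}) := by
        ext c; simp [Set.mem_diff]; tauto
      -- pick a common element distinct from x
      obtain ⟨c, hc1, hc2, hcx⟩ : ∃ c, c ∈ B1 ∧ c ∈ B2 ∧ c ≠ x := by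
        by_cases hax : a = x
        · exact ⟨b, hb1, hb2, fun h => hab (hax ▸ h ▸ rfl)⟩
        · exact ⟨a, ha1, ha2, hax⟩
      have conn1 : (G.induce (B1 \ {x})).Connected ∨ B1 \ {x} = B1 := by
        by_cases hxB : x ∈ B1
        · exact Or.inl (connected_induce_of_mem (h1.1.2 x hxB) ⟨hc1, hcx⟩)
        · exact Or.inr (by rw [Set.diff_singleton_eq_self hxB])
      have conn2 : (G.induce (B2 \ {x})).Connected ∨ B2 \ {x} = B2 := by
        by_cases hxB : x ∈ B2
        · exact Or.inl (connected_induce_of_mem (h2.1.2 x hxB) ⟨hc2, hcx⟩)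
        · exact Or.inr (by rw [Set.diff_singleton_eq_self hxB])
      have c1 : (G.induce (B1 \ {x})).Connected := by
        rcases conn1 with h | h
        · exact h
        · rw [h]; exact h1.1.1
      have c2 : (G.induce (B2 \ {x})).Connected := by
        rcases conn2 with h | h
        · exact h
        · rw [h]; exact h2.1.1
      rw [hsplit, ← connected_iff_numComponents_eq_one.mp
        (SimpleGraph.induce_union_connected c1.preconnected c2.preconnected ⟨c, ⟨hc1, hcx⟩, ⟨hc2, hcx⟩⟩)]
  have e1 : B1 = B1 ∪ B2 := h1.2 _ Set.subset_union_left hnice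
  have e2 : B2 = B1 ∪ B2 := h2.2 _ Set.subset_union_right hnice
  exact e1.trans e2.symm

lemma reachable_induce_mono {G : SimpleGraph V} {S T : Set V} (hST : S ⊆ T) {a b : V}
    (ha : a ∈ S) (hb : b ∈ S) (hma : a ∈ T) (hmb : b ∈ T)
    (h : (G.induce S).Reachable ⟨a, ha⟩ ⟨b, hb⟩) :
    (G.induce T).Reachable ⟨a, hma⟩ ⟨b, hmb⟩ :=
  h.map (G.induceHomOfLE hST).toHom


lemma exists_adj_of_reachable_ne {W : Type*} {K : SimpleGraph W} {a b : W}
    (h : K.Reachable a b) (hab : a ≠ b) : ∃ c, K.Adj a c := by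
  obtain ⟨p⟩ := h
  cases p with
  | nil => exact absurd rfl hab
  | cons hadj _ => exact ⟨_, hadj⟩

lemma block_exists_nbr {G : SimpleGraph V} (hconn : G.Connected) [Nontrivial V]
    {B : Set V} (hB : IsBlock G B) {v : V} (hv : v ∈ B) :
    ∃ u, u ∈ B ∧ G.Adj v u := by
  by_cases hone : ∃ u ∈ B, u ≠ v
  · obtain ⟨u, huB, huv⟩ := hone
    have hreach : (G.induce B).Reachable ⟨v, hv⟩ ⟨u, huB⟩ :=
      (isBlock_iff.mp hB).1.1.preconnected _ _
    obtain ⟨c, hc⟩ := exists_adj_of_reachable_ne hreach (fun h => huv (by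
      simpa using (congrArg Subtype.val h).symm))
    exact ⟨c.1, c.2, hc⟩
  · push_neg at hone
    obtain ⟨y, hy⟩ := exists_ne v
    have hreach : G.Reachable v y := hconn.preconnected v y
    obtain ⟨u, hu⟩ := exists_adj_of_reachable_ne hreach (Ne.symm hy)
    have hBvu : B ⊆ {v, u} := fun z hz => by
      rw [hone z hz]; exact Set.mem_insert v _
    have heq := (isBlock_iff.mp hB).2 {v, u} hBvu (nice_pair hu)
    have huB : u ∈ B := by rw [heq]; exact Set.mem_insert_iff.mpr (Or.inr rfl)
    exact absurd (hone u huB) hu.ne'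

lemma block_diff_reachable {G : SimpleGraph V} {B : Set V} (hB : IsBlock G B) {v a b : V}
    (hv : v ∈ B) (ha : a ∈ B) (hb : b ∈ B) (hav : a ≠ v) (hbv : b ≠ v)
    (hma : a ∈ ({v}ᶜ : Set V)) (hmb : b ∈ ({v}ᶜ : Set V)) :
    (G.induce ({v}ᶜ : Set V)).Reachable ⟨a, hma⟩ ⟨b, hmb⟩ := by
  have hnice := (isBlock_iff.mp hB).1
  have hcomp := hnice.2 v hv
  have hconn : (G.induce (B \ {v})).Connected :=
    connected_induce_of_mem hcomp ⟨ha, hav⟩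
  have hreach : (G.induce (B \ {v})).Reachable ⟨a, ha, hav⟩ ⟨b, hb, hbv⟩ :=
    hconn.preconnected _ _
  exact reachable_induce_mono (S := B \ {v}) (T := ({v}ᶜ : Set V)) (fun z hz => hz.2)
    (ha := ⟨ha, hav⟩) (hb := ⟨hb, hbv⟩) hma hmb hreach

lemma exists_nbr_reachable_aux {G : SimpleGraph V} {v : V} :
    ∀ {a : V} (_ : G.Walk a v) (hav : a ≠ v),
      ∃ u, ∃ h : G.Adj v u,
        (G.induce ({v}ᶜ : Set V)).Reachable ⟨a, hav⟩ ⟨u, h.ne'⟩ := by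
  intro a p
  induction p with
  | nil => intro h; exact absurd rfl h
  | @cons a c v hadj p ih =>
    intro hav
    by_cases hcv : c = v
    · subst hcv
      exact ⟨a, hadj.symm, SimpleGraph.Reachable.refl _⟩
    · obtain ⟨u, h, hr⟩ := ih hcv
      have hstep : (G.induce ({v}ᶜ : Set V)).Adj ⟨a, hav⟩ ⟨c, hcv⟩ := hadj
      exact ⟨u, h, hstep.reachable.trans hr⟩

lemma exists_nbr_reachable {G : SimpleGraph V} (hconn : G.Connected) {v a : V} (hav : a ≠ v) :
    ∃ u, ∃ h : G.Adj v u,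
      (G.induce ({v}ᶜ : Set V)).Reachable ⟨a, hav⟩ ⟨u, h.ne'⟩ :=
  exists_nbr_reachable_aux (hconn.preconnected a v).some hav

end Blocks

section MainProof
variable [Fintype V]

lemma no_improvement {G : SimpleGraph V} (hconn : G.Connected) {r : ℕ}
    (hG : cutVertexCount G = r)
    (hmax : ∀ H : SimpleGraph V, H.Connected → cutVertexCount H = r → SLEE H ≤ SLEE G)
    {v u w : V} (hu : G.Adj v u) (hw : G.Adj v w) (hne : u ≠ w) (hnadj : ¬ G.Adj u w)
    (hv2 : 2 ≤ numComponents ((addEdge G u w).induce ({v}ᶜ : Set V))) : False := by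
  have hHconn : (addEdge G u w).Connected := hconn.mono (le_addEdge G u w)
  have hHcut : cutVertexCount (addEdge G u w) = r := by
    rw [cutVertexCount_addEdge hconn hu hw hv2, hG]
  have hHadj : (addEdge G u w).Adj u w := by
    rw [addEdge_adj]; exact Or.inr ⟨hne, Or.inl ⟨rfl, rfl⟩⟩
  have hne' : G ≠ addEdge G u w := fun h => hnadj (h ▸ hHadj)
  exact absurd (hmax _ hHconn hHcut)
    (not_le.mpr (SLEE_strict_mono (le_addEdge G u w) hne'))

theorem main_thm {n r : ℕ}
    (hn : Fintype.card V = n) (hr1 : 1 ≤ r) (hr2 : r ≤ n - 3)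
    (G : SimpleGraph V) (hconn : G.Connected) (hG : cutVertexCount G = r)
    (hmax : ∀ H : SimpleGraph V, H.Connected → cutVertexCount H = r → SLEE H ≤ SLEE G) :
    ∀ v : V, IsCutVertex G v →
      Nat.card {B : Set V // IsBlock G B ∧ v ∈ B} = 2 := by
  classical
  intro v hv
  have hcard4 : 4 ≤ Fintype.card V := by omega
  haveI : Nontrivial V := Fintype.one_lt_card_iff_nontrivial.mp (by omega)
  have hvcut2 : 2 ≤ numComponents (G.induce ({v}ᶜ : Set V)) :=
    (isCutVertex_iff_of_connected hconn v).mp hv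
  -- lower bound: two distinct blocks containing v
  have lower : ∃ B1 B2 : Set V,
      (IsBlock G B1 ∧ v ∈ B1) ∧ (IsBlock G B2 ∧ v ∈ B2) ∧ B1 ≠ B2 := by
    haveI : Finite (G.induce ({v}ᶜ : Set V)).ConnectedComponent := Quot.finite _
    have hnt : Nontrivial (G.induce ({v}ᶜ : Set V)).ConnectedComponent :=
      Finite.one_lt_card_iff_nontrivial.mp (by exact hvcut2)
    obtain ⟨c, d, hcd⟩ := hnt
    obtain ⟨a', rfl⟩ := c.exists_rep
    obtain ⟨b', rfl⟩ := d.exists_rep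
    have hnr : ¬ (G.induce ({v}ᶜ : Set V)).Reachable a' b' :=
      fun h => hcd (SimpleGraph.ConnectedComponent.sound h)
    have hav : a'.1 ≠ v := a'.2
    have hbv : b'.1 ≠ v := b'.2
    obtain ⟨ua, hua, hra⟩ := exists_nbr_reachable hconn hav
    obtain ⟨ub, hub, hrb⟩ := exists_nbr_reachable hconn hbv
    obtain ⟨B1, hB1, hsub1⟩ := exists_block_of_nice (nice_pair hua)
    obtain ⟨B2, hB2, hsub2⟩ := exists_block_of_nice (nice_pair hub)
    refine ⟨B1, B2, ⟨hB1, hsub1 (Set.mem_insert _ _)⟩, ⟨hB2, hsub2 (Set.mem_insert _ _)⟩, ?_⟩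
    intro heq
    subst heq
    have huaB : ua ∈ B1 := hsub1 (Set.mem_insert_iff.mpr (Or.inr rfl))
    have hubB : ub ∈ B1 := hsub2 (Set.mem_insert_iff.mpr (Or.inr rfl))
    have hreach : (G.induce ({v}ᶜ : Set V)).Reachable ⟨ua, hua.ne'⟩ ⟨ub, hub.ne'⟩ :=
      block_diff_reachable hB1 (hsub1 (Set.mem_insert _ _)) huaB hubB hua.ne' hub.ne' _ _
    have : (G.induce ({v}ᶜ : Set V)).Reachable a' b' := by
      have h1 : (G.induce ({v}ᶜ : Set V)).Reachable ⟨a'.1, hav⟩ ⟨ua, hua.ne'⟩ := hra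
      have h2 : (G.induce ({v}ᶜ : Set V)).Reachable ⟨b'.1, hbv⟩ ⟨ub, hub.ne'⟩ := hrb
      have ha'' : a' = (⟨a'.1, hav⟩ : ({v}ᶜ : Set V)) := Subtype.ext rfl
      have hb'' : b' = (⟨b'.1, hbv⟩ : ({v}ᶜ : Set V)) := Subtype.ext rfl
      rw [ha'', hb'']
      exact (h1.trans hreach).trans h2.symm
    exact hnr this
  -- upper bound: no three distinct blocks containing v
  have upper : ¬ ∃ B1 B2 B3 : Set V,
      (IsBlock G B1 ∧ v ∈ B1) ∧ (IsBlock G B2 ∧ v ∈ B2) ∧ (IsBlock G B3 ∧ v ∈ B3) ∧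
      B1 ≠ B2 ∧ B1 ≠ B3 ∧ B2 ≠ B3 := by
    rintro ⟨B1, B2, B3, ⟨hB1, hv1⟩, ⟨hB2, hv2'⟩, ⟨hB3, hv3⟩, h12, h13, h23⟩
    obtain ⟨u1, hu1B, hu1⟩ := block_exists_nbr hconn hB1 hv1
    obtain ⟨u2, hu2B, hu2⟩ := block_exists_nbr hconn hB2 hv2'
    obtain ⟨u3, hu3B, hu3⟩ := block_exists_nbr hconn hB3 hv3
    -- generic finisher given a reachable pair in distinct blocks
    have key : ∀ (P Q : Set V), IsBlock G P → IsBlock G Q → P ≠ Q → v ∈ P → v ∈ Q →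
        ∀ p q, p ∈ P → q ∈ Q → ∀ (hvp : G.Adj v p) (hvq : G.Adj v q),
        (G.induce ({v}ᶜ : Set V)).Reachable ⟨p, hvp.ne'⟩ ⟨q, hvq.ne'⟩ → False := by
      intro P Q hP hQ hPQ hvP hvQ p q hpP hqQ hvp hvq hreach
      have hpq : p ≠ q := by
        intro h
        subst h
        exact hPQ (block_eq_block_of_two_mem hP hQ hvP hvQ hpP hqQ hvp.ne)
      have hnadj : ¬ G.Adj p q := by
        intro hadj
        obtain ⟨B, hB, hsubB⟩ := exists_block_of_nice (nice_triangle hvp hvq hadj)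
        have e1 : B = P := block_eq_block_of_two_mem hB hP
          (hsubB (Set.mem_insert _ _)) hvP
          (hsubB (Set.mem_insert_iff.mpr (Or.inr (Set.mem_insert _ _)))) hpP hvp.ne
        have e2 : B = Q := block_eq_block_of_two_mem hB hQ
          (hsubB (Set.mem_insert _ _)) hvQ
          (hsubB (by simp)) hqQ hvq.ne
        exact hPQ (e1 ▸ e2)
      refine no_improvement hconn hG hmax hvp hvq hpq hnadj ?_
      have hp' : p ∈ ({v}ᶜ : Set V) := hvp.ne'
      have hq' : q ∈ ({v}ᶜ : Set V) := hvq.ne'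
      rw [induce_addEdge_of_mem (K := G) hp' hq']
      exact le_trans hvcut2 (numComponents_le_addEdge_of_reachable hreach)
    by_cases hr12 : (G.induce ({v}ᶜ : Set V)).Reachable ⟨u1, hu1.ne'⟩ ⟨u2, hu2.ne'⟩
    · exact key B1 B2 hB1 hB2 h12 hv1 hv2' u1 u2 hu1B hu2B hu1 hu2 hr12
    by_cases hr13 : (G.induce ({v}ᶜ : Set V)).Reachable ⟨u1, hu1.ne'⟩ ⟨u3, hu3.ne'⟩
    · exact key B1 B3 hB1 hB3 h13 hv1 hv3 u1 u3 hu1B hu3B hu1 hu3 hr13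
    by_cases hr23 : (G.induce ({v}ᶜ : Set V)).Reachable ⟨u2, hu2.ne'⟩ ⟨u3, hu3.ne'⟩
    · exact key B2 B3 hB2 hB3 h23 hv2' hv3 u2 u3 hu2B hu3B hu2 hu3 hr23
    -- all three in distinct components: at least 3 components
    have h3comp : 3 ≤ numComponents (G.induce ({v}ᶜ : Set V)) := by
      haveI : Finite (G.induce ({v}ᶜ : Set V)).ConnectedComponent := Quot.finite _
      haveI := Fintype.ofFinite (G.induce ({v}ᶜ : Set V)).ConnectedComponent
      rw [numComponents, Nat.card_eq_fintype_card]
      have : (2 : ℕ) < Fintype.card (G.induce ({v}ᶜ : Set V)).ConnectedComponent := by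
        rw [Fintype.two_lt_card_iff]
        refine ⟨(G.induce ({v}ᶜ : Set V)).connectedComponentMk ⟨u1, hu1.ne'⟩,
                (G.induce ({v}ᶜ : Set V)).connectedComponentMk ⟨u2, hu2.ne'⟩,
                (G.induce ({v}ᶜ : Set V)).connectedComponentMk ⟨u3, hu3.ne'⟩, ?_, ?_, ?_⟩
        · exact fun h => hr12 (SimpleGraph.ConnectedComponent.exact h)
        · exact fun h => hr13 (SimpleGraph.ConnectedComponent.exact h)
        · exact fun h => hr23 (SimpleGraph.ConnectedComponent.exact h)
      omega
    have h12' : u1 ≠ u2 := by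
      intro h
      subst h
      exact h12 (block_eq_block_of_two_mem hB1 hB2 hv1 hv2' hu1B hu2B hu1.ne)
    have hnadj : ¬ G.Adj u1 u2 := by
      intro hadj
      have : (G.induce ({v}ᶜ : Set V)).Adj ⟨u1, hu1.ne'⟩ ⟨u2, hu2.ne'⟩ := hadj
      exact hr12 this.reachable
    refine no_improvement hconn hG hmax hu1 hu2 h12' hnadj ?_
    have hp' : u1 ∈ ({v}ᶜ : Set V) := hu1.ne'
    have hq' : u2 ∈ ({v}ᶜ : Set V) := hu2.ne'
    rw [induce_addEdge_of_mem (K := G) hp' hq']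
    have := numComponents_le_addEdge_add_one (G.induce ({v}ᶜ : Set V))
      (⟨u1, hu1.ne'⟩ : ({v}ᶜ : Set V)) ⟨u2, hu2.ne'⟩
    omega
  -- conclude
  haveI : Finite {B : Set V // IsBlock G B ∧ v ∈ B} := Subtype.finite
  haveI := Fintype.ofFinite {B : Set V // IsBlock G B ∧ v ∈ B}
  rw [Nat.card_eq_fintype_card]
  obtain ⟨B1, B2, hB1, hB2, hne⟩ := lower
  have hlb : 1 < Fintype.card {B : Set V // IsBlock G B ∧ v ∈ B} := by
    rw [Fintype.one_lt_card_iff]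
    exact ⟨⟨B1, hB1⟩, ⟨B2, hB2⟩, fun h => hne (congrArg Subtype.val h)⟩
  have hub : ¬ (2 < Fintype.card {B : Set V // IsBlock G B ∧ v ∈ B}) := by
    intro h
    rw [Fintype.two_lt_card_iff] at h
    obtain ⟨a, b, c, hab, hac, hbc⟩ := h
    exact upper ⟨a.1, b.1, c.1, a.2, b.2, c.2,
      fun h => hab (Subtype.ext h), fun h => hac (Subtype.ext h), fun h => hbc (Subtype.ext h)⟩
  omega

end MainProof


/-- in a graph maximizing SLEE among connected graphs on `n` vertices with `r`
cut vertices (`1 ≤ r ≤ n − 3`), every cut vertex lies in exactly two blocks. -/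
theorem cut_vertex_in_two_blocks_of_max_SLEE [Fintype V] {n r : ℕ}
    (hn : Fintype.card V = n) (hr1 : 1 ≤ r) (hr2 : r ≤ n - 3)
    (G : SimpleGraph V) (hconn : G.Connected) (hG : cutVertexCount G = r)
    (hmax : ∀ H : SimpleGraph V, H.Connected → cutVertexCount H = r → SLEE H ≤ SLEE G) :
    ∀ v : V, IsCutVertex G v →
      Nat.card {B : Set V // IsBlock G B ∧ v ∈ B} = 2 := by
  exact main_thm hn hr1 hr2 G hconn hG hmax
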